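/- Let α, β be real with 5β/4 > α + 1/2, set ρ := ρ_{α,β,0} and σ̃ := ρ_{(−2+20α+5β)/24, (2+4α+β)/6, 0}. Then the normalized geometric operator satisfies the identity (1/‖σ̃ − ρ‖)·(σ̃ − ρ − Re⟨σ̃, σ̃ − ρ⟩·1₉) = (1/(6√2))·(2·1₉ + U₁ − U₂) as 9×9 complex matrices (the witness C_II for region II in Weyl form). -/

import Mathlib

open Matrix Complex
open scoped Matrix Kronecker ComplexOrder

noncomputable section

/-- A density matrix: Hermitian, positive semidefinite, trace 1. -/
def IsDensityMatrix {n : Type*} [Fintype n] [DecidableEq n] (ρ : Matrix n n ℂ) : Prop :=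
  ρ.IsHermitian ∧ ρ.PosSemidef ∧ ρ.trace = 1

/-- A separable state on ℂ^d ⊗ ℂ^d : a finite convex combination of Kronecker
products of density matrices. -/
def IsSepState {d : ℕ} (ρ : Matrix (Fin d × Fin d) (Fin d × Fin d) ℂ) : Prop :=
  ∃ (K : ℕ) (p : Fin K → ℝ) (ρ₁ ρ₂ : Fin K → Matrix (Fin d) (Fin d) ℂ),
    (∀ k, 0 ≤ p k) ∧ (∑ k, p k = 1) ∧
    (∀ k, IsDensityMatrix (ρ₁ k)) ∧ (∀ k, IsDensityMatrix (ρ₂ k)) ∧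
    ρ = ∑ k, (p k : ℂ) • (ρ₁ k ⊗ₖ ρ₂ k)

/-- Hilbert–Schmidt inner product ⟨A,B⟩ = Tr(A†B). -/
def hsInner {n : Type*} [Fintype n] (A B : Matrix n n ℂ) : ℂ := (Aᴴ * B).trace

/-- Hilbert–Schmidt (Frobenius) norm ‖A‖ = √Tr(A†A). -/
def hsNorm {n : Type*} [Fintype n] (A : Matrix n n ℂ) : ℝ :=
  Real.sqrt ((Aᴴ * A).trace.re)

/-- The Weyl operator U_{nm} on ℂ^d: (U_{nm})_{k,l} = exp(2πi k n / d) if l = (k+m) mod d. -/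
def weyl (d : ℕ) (n m : Fin d) : Matrix (Fin d) (Fin d) ℂ :=
  Matrix.of fun k l =>
    if l = k + m then Complex.exp (2 * Real.pi * Complex.I * k.val * n.val / d) else 0

/-- The maximally entangled two-qutrit vector |φ⁺₃⟩. -/
def phiPlus3 : (Fin 3 × Fin 3) → ℂ :=
  fun p => if p.1 = p.2 then ((1 / Real.sqrt 3 : ℝ) : ℂ) else 0

/-- The projector |φ⁺₃⟩⟨φ⁺₃|. -/
def projPhiPlus3 : Matrix (Fin 3 × Fin 3) (Fin 3 × Fin 3) ℂ :=
  vecMulVec phiPlus3 (star phiPlus3)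

/-- The two-qutrit Bell projectors P_{nm}. -/
def bellP (n m : Fin 3) : Matrix (Fin 3 × Fin 3) (Fin 3 × Fin 3) ℂ :=
  (weyl 3 n m ⊗ₖ (1 : Matrix (Fin 3) (Fin 3) ℂ)) * projPhiPlus3 *
    (weyl 3 n m ⊗ₖ (1 : Matrix (Fin 3) (Fin 3) ℂ))ᴴ

/-- The three-parameter family of two-qutrit states ρ_{α,β,γ}. -/
def rhoFam (α β γ : ℝ) : Matrix (Fin 3 × Fin 3) (Fin 3 × Fin 3) ℂ :=
  (((1 - α - β - γ) / 9 : ℝ) : ℂ) • (1 : Matrix (Fin 3 × Fin 3) (Fin 3 × Fin 3) ℂ) +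
    (α : ℂ) • bellP 0 0 + ((β / 2 : ℝ) : ℂ) • (bellP 1 0 + bellP 2 0) +
    ((γ / 3 : ℝ) : ℂ) • (bellP 0 1 + bellP 1 1 + bellP 2 1)

/-- The operator U₁. -/
def opU1 : Matrix (Fin 3 × Fin 3) (Fin 3 × Fin 3) ℂ :=
  weyl 3 0 1 ⊗ₖ weyl 3 0 1 + weyl 3 0 2 ⊗ₖ weyl 3 0 2 + weyl 3 1 1 ⊗ₖ weyl 3 2 1 +
    weyl 3 1 2 ⊗ₖ weyl 3 2 2 + weyl 3 2 1 ⊗ₖ weyl 3 1 1 + weyl 3 2 2 ⊗ₖ weyl 3 1 2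

/-- The operator U₂ᴵ. -/
def opU2I : Matrix (Fin 3 × Fin 3) (Fin 3 × Fin 3) ℂ := weyl 3 1 0 ⊗ₖ weyl 3 2 0

/-- The operator U₂ᴵᴵ. -/
def opU2II : Matrix (Fin 3 × Fin 3) (Fin 3 × Fin 3) ℂ := weyl 3 2 0 ⊗ₖ weyl 3 1 0

/-- The operator U₂ = U₂ᴵ + U₂ᴵᴵ. -/
def opU2 : Matrix (Fin 3 × Fin 3) (Fin 3 × Fin 3) ℂ := opU2I + opU2II

/-- σ₊ = (1/3)(|01⟩⟨01| + |12⟩⟨12| + |20⟩⟨20|). -/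
def sigmaPlus : Matrix (Fin 3 × Fin 3) (Fin 3 × Fin 3) ℂ :=
  (1 / 3 : ℂ) • Matrix.diagonal (fun p => if p.2 = p.1 + 1 then 1 else 0)

/-- σ₋ = (1/3)(|10⟩⟨10| + |21⟩⟨21| + |02⟩⟨02|). -/
def sigmaMinus : Matrix (Fin 3 × Fin 3) (Fin 3 × Fin 3) ℂ :=
  (1 / 3 : ℂ) • Matrix.diagonal (fun p => if p.1 = p.2 + 1 then 1 else 0)

/-- The Horodecki states ρ_b. -/
def horodecki (b : ℝ) : Matrix (Fin 3 × Fin 3) (Fin 3 × Fin 3) ℂ :=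
  (2 / 7 : ℂ) • projPhiPlus3 + ((b / 7 : ℝ) : ℂ) • sigmaPlus +
    (((5 - b) / 7 : ℝ) : ℂ) • sigmaMinus

/-- Partial transpose in the second subsystem. -/
def ptB (ρ : Matrix (Fin 3 × Fin 3) (Fin 3 × Fin 3) ℂ) :
    Matrix (Fin 3 × Fin 3) (Fin 3 × Fin 3) ℂ :=
  Matrix.of fun p q => ρ (p.1, q.2) (q.1, p.2)


/-! ### Auxiliary material -/

def zeta : ℂ := Complex.exp (2 * Real.pi * Complex.I / 3)

lemma zeta_pow_three : zeta ^ 3 = 1 := by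
  rw [zeta, ← Complex.exp_nat_mul]
  rw [show ((3 : ℕ) : ℂ) * (2 * Real.pi * Complex.I / 3) = 2 * Real.pi * Complex.I by
    push_cast; ring]
  exact Complex.exp_two_pi_mul_I

lemma zeta_ne_one : zeta ≠ 1 := by
  intro h
  rw [zeta, Complex.exp_eq_one_iff] at h
  obtain ⟨n, hn⟩ := h
  have hx : (2 * Real.pi * Complex.I) ≠ 0 := by
    simp [Real.pi_ne_zero, Complex.I_ne_zero, Complex.ofReal_ne_zero]
  have h3 : (n : ℂ) * 3 = 1 := by
    have : (n : ℂ) * (2 * Real.pi * Complex.I) * 3 = (2 * Real.pi * Complex.I) := by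
      rw [← hn]; ring
    have h2 := mul_right_cancel₀ hx
      (by linear_combination this : (n : ℂ) * 3 * (2 * Real.pi * Complex.I)
        = 1 * (2 * Real.pi * Complex.I))
    simpa using h2
  have : ((n * 3 : ℤ) : ℂ) = ((1 : ℤ) : ℂ) := by push_cast; linear_combination h3
  have h4 : (n * 3 : ℤ) = 1 := by exact_mod_cast this
  omega

lemma zeta_sum : 1 + zeta + zeta ^ 2 = 0 := by
  have h := zeta_pow_three
  have h2 : (zeta - 1) * (1 + zeta + zeta ^ 2) = 0 := by linear_combination h
  rcases mul_eq_zero.mp h2 with h3 | h3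
  · exact absurd (sub_eq_zero.mp h3) zeta_ne_one
  · exact h3

lemma zeta_star : star zeta = zeta ^ 2 := by
  have h1 : star zeta * zeta = 1 := by
    rw [zeta, Complex.star_def, ← Complex.exp_conj, ← Complex.exp_add]
    rw [show (starRingEnd ℂ) (2 * Real.pi * Complex.I / 3) + 2 * Real.pi * Complex.I / 3 = 0 by
      simp [map_div₀, Complex.conj_I, Complex.conj_ofReal, map_ofNat]; ring]
    exact Complex.exp_zero
  have h2 : zeta ^ 2 * zeta = 1 := by linear_combination zeta_pow_three
  have hz : zeta ≠ 0 := by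
    intro h; rw [h] at h2; simp at h2
  have : star zeta * zeta = zeta ^ 2 * zeta := by rw [h1, h2]
  exact mul_right_cancel₀ hz this

lemma zeta_conj : (starRingEnd ℂ) zeta = zeta ^ 2 := zeta_star

lemma zp4 : zeta ^ 4 = zeta := by linear_combination zeta * zeta_pow_three
lemma zp5 : zeta ^ 5 = zeta ^ 2 := by linear_combination zeta^2 * zeta_pow_three
lemma zp6 : zeta ^ 6 = 1 := by linear_combination (zeta^3 + 1) * zeta_pow_three
lemma zp7 : zeta ^ 7 = zeta := by linear_combination (zeta^4 + zeta) * zeta_pow_three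
lemma zp8 : zeta ^ 8 = zeta ^ 2 := by linear_combination (zeta^5 + zeta^2) * zeta_pow_three
lemma zp9 : zeta ^ 9 = 1 := by linear_combination (zeta^6 + zeta^3 + 1) * zeta_pow_three
lemma zp10 : zeta ^ 10 = zeta := by linear_combination (zeta^7 + zeta^4 + zeta) * zeta_pow_three
lemma zp11 : zeta ^ 11 = zeta ^ 2 := by
  linear_combination (zeta^8 + zeta^5 + zeta^2) * zeta_pow_three
lemma zp12 : zeta ^ 12 = 1 := by
  linear_combination (zeta^9 + zeta^6 + zeta^3 + 1) * zeta_pow_three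

lemma weyl_apply (n m k l : Fin 3) :
    weyl 3 n m k l = if l = k + m then zeta ^ (k.val * n.val) else 0 := by
  rw [weyl, Matrix.of_apply]
  split_ifs with h
  · rw [zeta, ← Complex.exp_nat_mul]; congr 1; push_cast; ring
  · rfl

/-- Explicit form of `opU1 - opU2`. -/
def Ew : Matrix (Fin 3 × Fin 3) (Fin 3 × Fin 3) ℂ :=
  Matrix.of fun p q =>
    if p.1 = p.2 ∧ q.1 = q.2 then (if p.1 = q.1 then -2 else 3)
    else if p = q then 1 else 0

set_option maxHeartbeats 1000000 in
lemma U12_eq : opU1 - opU2 = Ew := by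
  ext ⟨i, j⟩ ⟨k, l⟩
  fin_cases i <;> fin_cases j <;> fin_cases k <;> fin_cases l <;>
    simp [opU1, opU2, opU2I, opU2II, Ew, weyl_apply, Matrix.kroneckerMap_apply,
      Matrix.sub_apply, Matrix.add_apply, Fin.ext_iff, Prod.ext_iff] <;>
    first
      | rfl
      | (norm_num; done)
      | linear_combination zeta_sum
      | linear_combination -zeta_sum
      | linear_combination 2*zeta_sum
      | linear_combination -2*zeta_sum
      | linear_combination 2*zeta_pow_three
      | linear_combination -(2*zeta_pow_three)
      | linear_combination zeta*zeta_pow_three + zeta_sum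
      | linear_combination -(zeta*zeta_pow_three) - zeta_sum
      | linear_combination (zeta^2+zeta)*zeta_pow_three + zeta_sum
      | linear_combination -((zeta^2+zeta)*zeta_pow_three) - zeta_sum
      | linear_combination 2*(zeta^3+1)*zeta_pow_three
      | linear_combination -(2*(zeta^3+1)*zeta_pow_three)

lemma proj_apply (p q : Fin 3 × Fin 3) :
    projPhiPlus3 p q = if p.1 = p.2 ∧ q.1 = q.2 then (1/3 : ℂ) else 0 := by
  rw [projPhiPlus3, vecMulVec_apply, phiPlus3]
  simp only [Pi.star_apply, phiPlus3]
  split_ifs with h1 h2 h3 h4 <;> simp_all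
  rw [← mul_inv, ← Complex.ofReal_mul, Real.mul_self_sqrt (by norm_num : (0:ℝ) ≤ 3)]
  norm_num

/-- Explicit form of `rhoFam α β 0`. -/
def rhoEnt (α β : ℝ) : Matrix (Fin 3 × Fin 3) (Fin 3 × Fin 3) ℂ :=
  Matrix.of fun p q =>
    (if p = q then (((1 - α - β) / 9 : ℝ) : ℂ) else 0) +
    (if p.1 = p.2 ∧ q.1 = q.2 then
      ((α / 3 : ℝ) : ℂ) + (if p.1 = q.1 then ((β / 3 : ℝ) : ℂ) else ((-β / 6 : ℝ) : ℂ))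
     else 0)

set_option maxHeartbeats 4000000 in
lemma rho_eq (α β : ℝ) : rhoFam α β 0 = rhoEnt α β := by
  ext ⟨i, j⟩ ⟨k, l⟩
  fin_cases i <;> fin_cases j <;> fin_cases k <;> fin_cases l <;>
    simp [rhoFam, rhoEnt, bellP, weyl_apply, proj_apply, Matrix.mul_apply,
      Matrix.conjTranspose_apply, Matrix.kroneckerMap_apply, Matrix.one_apply,
      Fintype.sum_prod_type, Fin.sum_univ_succ, zeta_star, zeta_conj, star_pow, map_pow,
      Prod.ext_iff] <;>
    (try push_cast) <;>
    (try ring_nf) <;>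
    (try simp only [zeta_pow_three, zp4, zp5, zp6, zp7, zp8, zp9, zp10, zp11, zp12]) <;>
    first
      | rfl
      | (norm_num; done)
      | (push_cast; ring1)
      | linear_combination ((β : ℂ)/6) * zeta_sum
      | linear_combination (-(β : ℂ)/6) * zeta_sum
      | linear_combination ((β : ℂ)/3) * zeta_sum
      | linear_combination (-(β : ℂ)/3) * zeta_sum
      | linear_combination ((β : ℂ)/2) * zeta_sum
      | linear_combination (-(β : ℂ)/2) * zeta_sum

set_option maxHeartbeats 1000000 in
lemma trace_EE : (Ewᴴ * Ew).trace = 72 := by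
  simp [Matrix.trace, Matrix.mul_apply, Matrix.conjTranspose_apply, Ew,
    Fintype.sum_prod_type, Fin.sum_univ_succ, Prod.ext_iff, map_ofNat,
    map_inv₀, map_neg, map_div₀, Complex.conj_ofReal]
  norm_num

set_option maxHeartbeats 1000000 in
lemma trace_rhoE (a b : ℝ) : ((rhoEnt a b)ᴴ * Ew).trace = ((4*a - 5*b : ℝ) : ℂ) := by
  simp [Matrix.trace, Matrix.mul_apply, Matrix.conjTranspose_apply, Ew, rhoEnt,
    Fintype.sum_prod_type, Fin.sum_univ_succ, Prod.ext_iff, map_ofNat,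
    map_inv₀, map_neg, map_div₀, Complex.conj_ofReal]
  push_cast
  ring

set_option maxHeartbeats 2000000 in
/-- The witness C_II for region II in Weyl form. -/
theorem stmt8 (α β : ℝ) (hβ : α + 1 / 2 < 5 * β / 4)
    (ρ σt : Matrix (Fin 3 × Fin 3) (Fin 3 × Fin 3) ℂ)
    (hρ : ρ = rhoFam α β 0)
    (hσt : σt = rhoFam ((-2 + 20 * α + 5 * β) / 24) ((2 + 4 * α + β) / 6) 0) :
    (1 / hsNorm (σt - ρ)) • (σt - ρ - (((hsInner σt (σt - ρ)).re : ℝ) : ℂ) • 1)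
      = ((1 / (6 * Real.sqrt 2) : ℝ) : ℂ) •
        (2 • (1 : Matrix (Fin 3 × Fin 3) (Fin 3 × Fin 3) ℂ) + opU1 - opU2) := by
  have ht : (0:ℝ) < 5*β - 4*α - 2 := by linarith
  set t : ℝ := 5*β - 4*α - 2 with htdef
  have htne : t ≠ 0 := ne_of_gt ht
  have hs2 : Real.sqrt 2 * Real.sqrt 2 = 2 := Real.mul_self_sqrt (by norm_num)
  have hs2pos : 0 < Real.sqrt 2 := Real.sqrt_pos.mpr (by norm_num)
  have hA : σt - ρ = ((t/72 : ℝ) : ℂ) • Ew := by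
    rw [hρ, hσt, rho_eq, rho_eq]
    ext p q
    simp only [rhoEnt, Ew, Matrix.sub_apply, Matrix.smul_apply, Matrix.of_apply, smul_eq_mul]
    obtain ⟨i, j⟩ := p; obtain ⟨k, l⟩ := q
    split_ifs <;>
      first
        | (push_cast [htdef]; ring1)
        | (exfalso; simp_all [Prod.ext_iff])
  have hnorm : hsNorm (σt - ρ) = t / (6 * Real.sqrt 2) := by
    rw [hA, hsNorm, Matrix.conjTranspose_smul, Matrix.smul_mul, Matrix.mul_smul,
      Matrix.trace_smul, Matrix.trace_smul, trace_EE]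
    simp only [smul_eq_mul, Complex.star_def, Complex.conj_ofReal]
    rw [show ((t/72 : ℝ) : ℂ) * (((t/72 : ℝ) : ℂ) * 72) = (((t/72)*((t/72)*72) : ℝ) : ℂ) by
      push_cast; ring]
    rw [Complex.ofReal_re]
    rw [show (t/72)*((t/72)*72) = (t / (6 * Real.sqrt 2))^2 by
      rw [div_pow, mul_pow, Real.sq_sqrt (by norm_num : (0:ℝ) ≤ 2)]
      ring]
    exact Real.sqrt_sq (by positivity)
  have hinner : ((hsInner σt (σt - ρ)).re : ℝ) = -(t/36) := by
    rw [hsInner, hA, hσt, rho_eq, Matrix.mul_smul, Matrix.trace_smul, trace_rhoE]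
    rw [smul_eq_mul, ← Complex.ofReal_mul, Complex.ofReal_re, htdef]
    ring
  rw [hnorm, hinner, hA]
  rw [show 2 • (1 : Matrix (Fin 3 × Fin 3) (Fin 3 × Fin 3) ℂ) + opU1 - opU2
      = 1 + 1 + Ew by rw [add_sub_assoc, U12_eq, two_smul]]
  ext p q
  simp only [Matrix.smul_apply, Matrix.sub_apply, Matrix.add_apply, Matrix.smul_apply,
    Matrix.one_apply, Ew, Matrix.of_apply, smul_eq_mul, Complex.real_smul]
  push_cast
  obtain ⟨i, j⟩ := p; obtain ⟨k, l⟩ := q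
  have hcast : ((t : ℝ) : ℂ) ≠ 0 := Complex.ofReal_ne_zero.mpr htne
  have hscast : ((Real.sqrt 2 : ℝ) : ℂ) ≠ 0 := Complex.ofReal_ne_zero.mpr (ne_of_gt hs2pos)
  have hs2c : ((Real.sqrt 2 : ℝ) : ℂ) * ((Real.sqrt 2 : ℝ) : ℂ) = 2 := by
    rw [← Complex.ofReal_mul, hs2]; norm_num
  split_ifs <;> (try ring1)
  all_goals field_simp
  all_goals try ring1
  all_goals
    first
      | (rw [pow_two, hs2c]; ring1)
      | (ring_nf; rw [pow_two, hs2c]; ring1)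
      | (ring_nf; rw [pow_two, hs2c]; norm_num)

end
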